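/- arXiv:1807.08755 — 2 statements merged into one kernel-verified Lean document; each statement's English description precedes it below -/
import Mathlib

section
/- Let K be a field, let d ≥ 1, and let z₁, …, z_d be pairwise distinct elements of K. Then for every integer n ≥ 1, Σ_{ℓ=1}^{d} z_ℓⁿ · Π_{m≠ℓ} z_m/(z_m − z_ℓ) = (−1)^{d+1} · h_{n−d}(z₁, …, z_d) · z₁z₂⋯z_d. (This identity is the algebraic content of the paper's pushforward Lemma f_*Eⁿ = (−1)^{d+1} h_{n−d}(Z₁,…,Z_d) Z₁⋯Z_d for the blowup along a transverse complete intersection of d divisors, combined with the pushforward Theorem f_*Q(E) = Σ_ℓ Q(Z_ℓ) Π_{m≠ℓ} Z_m/(Z_m − Z_ℓ).) -/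
open Polynomial PowerSeries Finset in

lemma geom_mul {K : Type*} [Field K] (z : K) :
    ((1 : K[X]) - Polynomial.C z * Polynomial.X : K[X]).toPowerSeries *
      PowerSeries.mk (fun k => z ^ k) = 1 := by
  have h : ((1 : K[X]) - Polynomial.C z * Polynomial.X : K[X]).toPowerSeries
      = 1 - PowerSeries.C z * PowerSeries.X := by
    simp [Polynomial.coe_sub, Polynomial.coe_mul]
  rw [h]
  ext n
  rw [sub_mul, one_mul, map_sub]
  rcases n with _ | n
  · simp
  · rw [mul_assoc, PowerSeries.coeff_C_mul, PowerSeries.coeff_succ_X_mul]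
    simp [pow_succ, mul_comm]

open Polynomial PowerSeries Finset in

lemma coeff_prod_geom {K : Type*} [Field K] {d : ℕ} (z : Fin d → K) (n : ℕ) :
    PowerSeries.coeff n (∏ i : Fin d, PowerSeries.mk (fun k => z i ^ k)) =
      ∑ x ∈ Finset.Nat.antidiagonalTuple d n, ∏ i : Fin d, z i ^ x i := by
  rw [PowerSeries.coeff_prod]
  refine Finset.sum_nbij' (fun l => (l : Fin d → ℕ)) (fun x => Finsupp.equivFunOnFinite.symm x)
    ?_ ?_ ?_ ?_ ?_
  · intro l hl
    rw [Finset.mem_finsuppAntidiag] at hl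
    rw [Finset.Nat.mem_antidiagonalTuple]
    simpa using hl.1
  · intro x hx
    rw [Finset.Nat.mem_antidiagonalTuple] at hx
    rw [Finset.mem_finsuppAntidiag]
    constructor
    · simpa using hx
    · exact Finset.subset_univ _
  · intro l _; exact Finsupp.equivFunOnFinite.symm_apply_apply l
  · intro x _; rfl
  · intro l _
    exact Finset.prod_congr rfl fun i _ => by simp

open Polynomial Finset in

lemma sum_B_eq_one {K : Type*} [Field K] {d : ℕ} (hd : 1 ≤ d) (z : Fin d → K) (hz : Function.Injective z) :
    ∑ ℓ : Fin d, ∏ m ∈ Finset.univ.erase ℓ, z m / (z m - z ℓ) = 1 := by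
  have h := Lagrange.sum_basis (s := Finset.univ) (v := z) hz.injOn
    ⟨⟨0, hd⟩, Finset.mem_univ _⟩
  have h2 := congrArg (Polynomial.eval 0) h
  simp only [Polynomial.eval_finset_sum, Polynomial.eval_one] at h2
  rw [← h2]
  refine Finset.sum_congr rfl fun ℓ _ => ?_
  rw [Lagrange.basis, Polynomial.eval_prod]
  refine Finset.prod_congr rfl fun m hm => ?_
  have hmℓ : z m - z ℓ ≠ 0 := sub_ne_zero.mpr fun h => (Finset.mem_erase.mp hm).1 (hz h)
  rw [Lagrange.basisDivisor]
  simp only [Polynomial.eval_mul, Polynomial.eval_C, Polynomial.eval_sub, Polynomial.eval_X]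
  have hℓm : z ℓ - z m ≠ 0 := sub_ne_zero.mpr fun h => (Finset.mem_erase.mp hm).1 (hz h.symm)
  field_simp
  ring

open Polynomial Finset in

lemma star_identity {K : Type*} [Field K] {d : ℕ} (hd : 1 ≤ d) (z : Fin d → K) (hz : Function.Injective z)
    (hz0 : ∀ i, z i ≠ 0)
    (hB : ∑ ℓ : Fin d, ∏ m ∈ Finset.univ.erase ℓ, z m / (z m - z ℓ) = 1) :
    ∑ ℓ : Fin d, Polynomial.C (∏ m ∈ Finset.univ.erase ℓ, z m / (z m - z ℓ)) *
        ∏ m ∈ Finset.univ.erase ℓ, (1 - Polynomial.C (z m) * Polynomial.X) =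
      ∏ m : Fin d, (1 - Polynomial.C (z m) * Polynomial.X) +
        Polynomial.C ((-1 : K) ^ (d + 1) * ∏ m : Fin d, z m) * Polynomial.X ^ d := by
  rw [← sub_eq_zero]
  set L : K[X] := ∑ ℓ : Fin d, Polynomial.C (∏ m ∈ Finset.univ.erase ℓ, z m / (z m - z ℓ)) *
        ∏ m ∈ Finset.univ.erase ℓ, (1 - Polynomial.C (z m) * Polynomial.X) with hL
  set R : K[X] := ∏ m : Fin d, (1 - Polynomial.C (z m) * Polynomial.X) +
        Polynomial.C ((-1 : K) ^ (d + 1) * ∏ m : Fin d, z m) * Polynomial.X ^ d with hR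
  have hdeg1 : ∀ m : Fin d, ((1 : K[X]) - Polynomial.C (z m) * Polynomial.X).natDegree ≤ 1 := by
    intro m
    refine (Polynomial.natDegree_sub_le _ _).trans ?_
    simp only [Polynomial.natDegree_one, max_le_iff]
    exact ⟨Nat.zero_le _, (Polynomial.natDegree_C_mul_le _ _).trans (by simp)⟩
  have hdegP : ∀ s : Finset (Fin d),
      (∏ m ∈ s, ((1 : K[X]) - Polynomial.C (z m) * Polynomial.X)).natDegree ≤ s.card := by
    intro s
    refine (Polynomial.natDegree_prod_le _ _).trans ?_
    calc ∑ m ∈ s, ((1 : K[X]) - Polynomial.C (z m) * Polynomial.X).natDegree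
        ≤ s.card • 1 := Finset.sum_le_card_nsmul _ _ 1 fun m _ => hdeg1 m
      _ = s.card := by simp
  have hdegD : (L - R).natDegree < d + 1 := by
    refine Nat.lt_succ_of_le ((Polynomial.natDegree_sub_le _ _).trans (max_le ?_ ?_))
    · refine Polynomial.natDegree_sum_le_of_forall_le _ _ fun ℓ _ => ?_
      refine (Polynomial.natDegree_C_mul_le _ _).trans ((hdegP _).trans ?_)
      simp [Finset.card_erase_of_mem]
    · refine (Polynomial.natDegree_add_le _ _).trans (max_le ((hdegP _).trans (by simp)) ?_)
      exact (Polynomial.natDegree_C_mul_le _ _).trans (by simp)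
  have key : L - R = 0 := by
    refine Polynomial.eq_zero_of_natDegree_lt_card_of_eval_eq_zero (L - R)
      (f := fun o : Option (Fin d) => o.elim 0 (fun k => (z k)⁻¹)) ?_ ?_ ?_
    · rintro (_ | k) (_ | k') h
      · rfl
      · exact absurd h.symm (inv_ne_zero (hz0 k'))
      · exact absurd h (inv_ne_zero (hz0 k))
      · simp only [Option.elim] at h
        rw [inv_inj] at h
        rw [hz h]
    · rintro (_ | k)
      · -- eval at 0
        simp only [Option.elim, Polynomial.eval_sub, hL, hR]
        rw [Polynomial.eval_finset_sum, Polynomial.eval_add]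
        have e1 : ∀ ℓ : Fin d, Polynomial.eval 0 (Polynomial.C (∏ m ∈ Finset.univ.erase ℓ, z m / (z m - z ℓ)) *
            ∏ m ∈ Finset.univ.erase ℓ, (1 - Polynomial.C (z m) * Polynomial.X)) =
            ∏ m ∈ Finset.univ.erase ℓ, z m / (z m - z ℓ) := by
          intro ℓ
          rw [Polynomial.eval_mul, Polynomial.eval_C, Polynomial.eval_prod]
          simp
        rw [Finset.sum_congr rfl fun ℓ _ => e1 ℓ, hB]
        rw [Polynomial.eval_mul, Polynomial.eval_prod]
        simp [zero_pow (by omega : d ≠ 0)]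
      · -- eval at (z k)⁻¹
        simp only [Option.elim, Polynomial.eval_sub, hL, hR]
        rw [Polynomial.eval_finset_sum, Polynomial.eval_add]
        rw [Finset.sum_eq_single k ?_ (by simp)]
        · rw [Polynomial.eval_mul, Polynomial.eval_C, Polynomial.eval_prod]
          have hfull : Polynomial.eval (z k)⁻¹ (∏ m : Fin d, (1 - Polynomial.C (z m) * Polynomial.X)) = 0 := by
            rw [Polynomial.eval_prod]
            refine Finset.prod_eq_zero (Finset.mem_univ k) ?_
            simp [mul_inv_cancel₀ (hz0 k)]
          rw [hfull, zero_add, Polynomial.eval_mul, Polynomial.eval_C, Polynomial.eval_pow,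
            Polynomial.eval_X]
          rw [← Finset.prod_mul_distrib]
          obtain ⟨e, rfl⟩ : ∃ e, d = e + 1 := ⟨d - 1, by omega⟩
          have hcard : (Finset.univ.erase k).card = e := by
            simp [Finset.card_erase_of_mem, Fintype.card_fin]
          have hfac : ∀ m ∈ Finset.univ.erase k,
              z m / (z m - z k) * Polynomial.eval (z k)⁻¹ (1 - Polynomial.C (z m) * Polynomial.X) =
              (-1) * z m * (z k)⁻¹ := by
            intro m hm
            have hmk : z m - z k ≠ 0 := sub_ne_zero.mpr fun h => (Finset.mem_erase.mp hm).1 (hz h)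
            simp only [Polynomial.eval_sub, Polynomial.eval_one, Polynomial.eval_mul,
              Polynomial.eval_C, Polynomial.eval_X]
            have hzk : z k * (z k)⁻¹ = 1 := mul_inv_cancel₀ (hz0 k)
            field_simp
            linear_combination (-(z m)) * hzk
          rw [Finset.prod_congr rfl hfac]
          rw [Finset.prod_mul_distrib, Finset.prod_mul_distrib, Finset.prod_const,
            Finset.prod_const, hcard]
          have hall : ∏ m : Fin (e+1), z m = z k * ∏ m ∈ Finset.univ.erase k, z m :=
            (Finset.mul_prod_erase _ _ (Finset.mem_univ k)).symm
          rw [hall]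
          have hpow : (-1 : K) ^ (e + 1 + 1) = (-1) ^ e := by
            rw [pow_succ, pow_succ]; ring
          rw [hpow]
          have hzk : z k * (z k)⁻¹ = 1 := mul_inv_cancel₀ (hz0 k)
          field_simp
          linear_combination (-((∏ x ∈ Finset.univ.erase k, z x) * ((z k)⁻¹)^e * (-1:K)^e)) * hzk
        · intro ℓ _ hℓ
          rw [Polynomial.eval_mul, Polynomial.eval_prod]
          refine mul_eq_zero_of_right _ (Finset.prod_eq_zero
            (Finset.mem_erase.mpr ⟨fun h => hℓ h.symm, Finset.mem_univ k⟩) ?_)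
          simp [mul_inv_cancel₀ (hz0 k)]
    · simpa using hdegD
  exact key

open Polynomial PowerSeries Finset in

lemma assembled {K : Type*} [Field K] {d : ℕ} (z : Fin d → K) (c : K)
    (hstar : ∑ ℓ : Fin d, Polynomial.C (∏ m ∈ Finset.univ.erase ℓ, z m / (z m - z ℓ)) *
        ∏ m ∈ Finset.univ.erase ℓ, (1 - Polynomial.C (z m) * Polynomial.X) =
      ∏ m : Fin d, (1 - Polynomial.C (z m) * Polynomial.X) +
        Polynomial.C c * Polynomial.X ^ d) (n : ℕ) (hn : 1 ≤ n) :
    ∑ ℓ : Fin d, (∏ m ∈ Finset.univ.erase ℓ, z m / (z m - z ℓ)) * z ℓ ^ n =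
      if d ≤ n then
        c * PowerSeries.coeff (n - d) (∏ i : Fin d, PowerSeries.mk fun k => z i ^ k)
      else 0 := by
  set g : Fin d → PowerSeries K := fun i => PowerSeries.mk fun k => z i ^ k with hg
  set φ : K[X] →+* PowerSeries K := Polynomial.coeToPowerSeries.ringHom with hφ
  have hgs : ∀ s : Finset (Fin d),
      φ (∏ m ∈ s, ((1 : K[X]) - Polynomial.C (z m) * Polynomial.X)) * ∏ m ∈ s, g m = 1 := by
    intro s
    rw [map_prod, ← Finset.prod_mul_distrib]
    refine Finset.prod_eq_one fun m _ => ?_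
    exact geom_mul (z m)
  have hmain : ∑ ℓ : Fin d, PowerSeries.C (∏ m ∈ Finset.univ.erase ℓ, z m / (z m - z ℓ)) * g ℓ
      = 1 + PowerSeries.C c * (PowerSeries.X ^ d * ∏ m : Fin d, g m) := by
    have h1 := congrArg (fun p : K[X] => φ p * ∏ m : Fin d, g m) hstar
    simp only [map_add, map_sum, map_mul, add_mul, Finset.sum_mul] at h1
    calc ∑ ℓ : Fin d, PowerSeries.C (∏ m ∈ Finset.univ.erase ℓ, z m / (z m - z ℓ)) * g ℓ
        = ∑ ℓ : Fin d, φ (Polynomial.C (∏ m ∈ Finset.univ.erase ℓ, z m / (z m - z ℓ))) *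
            φ (∏ m ∈ Finset.univ.erase ℓ, ((1 : K[X]) - Polynomial.C (z m) * Polynomial.X)) *
            ∏ m : Fin d, g m := by
          refine Finset.sum_congr rfl fun ℓ _ => ?_
          rw [← Finset.mul_prod_erase _ g (Finset.mem_univ ℓ)]
          rw [show φ (Polynomial.C (∏ m ∈ Finset.univ.erase ℓ, z m / (z m - z ℓ))) =
            PowerSeries.C (∏ m ∈ Finset.univ.erase ℓ, z m / (z m - z ℓ)) from Polynomial.coe_C _]
          have h3 := hgs (Finset.univ.erase ℓ)
          linear_combination (-(PowerSeries.C (∏ m ∈ Finset.univ.erase ℓ, z m / (z m - z ℓ)) *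
            g ℓ)) * h3
      _ = 1 + PowerSeries.C c * (PowerSeries.X ^ d * ∏ m : Fin d, g m) := by
          rw [h1, hgs]
          congr 1
          rw [map_pow]
          rw [show φ Polynomial.X = (PowerSeries.X : PowerSeries K) from Polynomial.coe_X]
          rw [show φ (Polynomial.C c) = PowerSeries.C c from Polynomial.coe_C _]
          ring
  have h2 := congrArg (PowerSeries.coeff n) hmain
  rw [map_sum, map_add] at h2
  simp only [PowerSeries.coeff_C_mul] at h2
  rw [PowerSeries.coeff_one, if_neg (by omega), zero_add,
    PowerSeries.coeff_X_pow_mul'] at h2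
  simp only [hg, PowerSeries.coeff_mk] at h2
  rw [h2, mul_ite, mul_zero]

/-- Pushforward of powers of the exceptional divisor: for pairwise distinct
`z₁, …, z_d` in a field `K` (`d ≥ 1`) and any `n ≥ 1`,
`Σ_ℓ z_ℓⁿ · Π_{m ≠ ℓ} z_m/(z_m − z_ℓ) = (−1)^{d+1} · h_{n−d}(z₁, …, z_d) · z₁⋯z_d`,
where `h_j` is the complete homogeneous symmetric polynomial of degree `j`
(with `h_j = 0` for `j < 0` and `h₀ = 1`). -/
theorem pushforward_exceptional_powers {K : Type*} [Field K] {d : ℕ} (hd : 1 ≤ d)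
    (z : Fin d → K) (hz : Function.Injective z) (n : ℕ) (hn : 1 ≤ n) :
    ∑ ℓ : Fin d, z ℓ ^ n * ∏ m ∈ Finset.univ.erase ℓ, z m / (z m - z ℓ) =
      (-1 : K) ^ (d + 1) *
        (if d ≤ n then
            ∑ x ∈ Finset.Nat.antidiagonalTuple d (n - d), ∏ i : Fin d, z i ^ x i
          else 0) *
        ∏ m : Fin d, z m := by
  by_cases h0 : ∃ i, z i = 0
  · obtain ⟨i, hi⟩ := h0
    have hL : ∑ ℓ : Fin d, z ℓ ^ n * ∏ m ∈ Finset.univ.erase ℓ, z m / (z m - z ℓ) = 0 := by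
      refine Finset.sum_eq_zero fun ℓ _ => ?_
      by_cases hiℓ : ℓ = i
      · subst hiℓ
        rw [hi, zero_pow (by omega : n ≠ 0), zero_mul]
      · refine mul_eq_zero_of_right _ (Finset.prod_eq_zero
          (Finset.mem_erase.mpr ⟨fun h => hiℓ h.symm, Finset.mem_univ i⟩) ?_)
        rw [hi, zero_div]
    rw [hL, Finset.prod_eq_zero (Finset.mem_univ i) hi, mul_zero]
  · push_neg at h0
    have hB := sum_B_eq_one hd z hz
    have hstar := star_identity hd z hz h0 hB
    have h := assembled z ((-1 : K) ^ (d + 1) * ∏ m : Fin d, z m) hstar n hn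
    rw [coeff_prod_geom] at h
    calc ∑ ℓ : Fin d, z ℓ ^ n * ∏ m ∈ Finset.univ.erase ℓ, z m / (z m - z ℓ)
        = ∑ ℓ : Fin d, (∏ m ∈ Finset.univ.erase ℓ, z m / (z m - z ℓ)) * z ℓ ^ n :=
          Finset.sum_congr rfl fun ℓ _ => mul_comm _ _
      _ = _ := by
          rw [h]
          split_ifs with hdn
          · ring
          · rw [mul_zero, zero_mul]
end

section
/- Let R = ℚ[L, c₁, c₂, c₃] and let ν : R[H] → R be the R-linear map determined by ν(1) = ν(H) = 0 and ν(H^k) = ((−2)^{k−1} − (−3)^{k−1})·L^{k−2} for k ≥ 2. With y₁ = c₁ − L; y₂ = 3H² + 13HL + 12L² − c₁L + c₂; y₃ = −8H³ + (3c₁ − 52L)H² + (13c₁L − 108L²)H + 12c₁L² − c₂L + c₃ − 72L³; and y₄ = 24H⁴ + (204L − 8c₁)H³ + (−52c₁L + 3c₂ + 636L²)H² + (−108c₁L² + 13c₂L + 864L³)H − 72c₁L³ + 12c₂L² − c₃L + 432L⁴, the following identities hold in R: ν(y₁⁴·(3H + 6L)) = 0; ν(y₁²y₂·(3H + 6L))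 = 12L(c₁ − L)²; ν(y₂²·(3H + 6L)) = 24L(6L² − c₁L + c₂); ν(y₁y₃·(3H + 6L)) = 12L(c₁ − 6L)(c₁ − L); ν(y₄·(3H + 6L)) = 12L(36L² − 6Lc₁ + c₂). (This is the computational content of the paper's Theorem on the Chern numbers of a smooth Weierstrass fourfold: ∫c₁⁴ = 0, ∫c₁²c₂ = 12∫_B L(c₁−L)², ∫c₂² = 24∫_B L(6L²−c₁L+c₂), ∫c₁c₃ = 12∫_B L(c₁−6L)(c₁−L), ∫c₄ = 12∫_B L(36L²−6Lc₁+c₂).) -/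
open Polynomial

namespace SmoothWeierstrassChernNumbers

/-- The ring `R = ℚ[L, c₁, c₂, c₃]`: variables `0 ↦ L`, `1 ↦ c₁`, `2 ↦ c₂`, `3 ↦ c₃`. -/
noncomputable abbrev R : Type := MvPolynomial (Fin 4) ℚ

noncomputable def L : R := MvPolynomial.X 0
noncomputable def c₁ : R := MvPolynomial.X 1
noncomputable def c₂ : R := MvPolynomial.X 2
noncomputable def c₃ : R := MvPolynomial.X 3

/-- The `R`-linear pushforward `ν : R[H] → R` determined by `ν(1) = ν(H) = 0` and
`ν(H^k) = ((−2)^{k−1} − (−3)^{k−1})·L^{k−2}` for `k ≥ 2`. -/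
noncomputable def ν (p : Polynomial R) : R :=
  p.sum fun k a =>
    a * if k ≤ 1 then 0 else ((-2 : R) ^ (k - 1) - (-3 : R) ^ (k - 1)) * L ^ (k - 2)

/-- `H` as an element of `R[H]`. -/
noncomputable def H : Polynomial R := X

noncomputable def y₁ : Polynomial R := C (c₁ - L)
noncomputable def y₂ : Polynomial R :=
  3 * H ^ 2 + 13 * H * C L + C (12 * L ^ 2 - c₁ * L + c₂)
noncomputable def y₃ : Polynomial R :=
  -8 * H ^ 3 + C (3 * c₁ - 52 * L) * H ^ 2 + C (13 * c₁ * L - 108 * L ^ 2) * H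
    + C (12 * c₁ * L ^ 2 - c₂ * L + c₃ - 72 * L ^ 3)
noncomputable def y₄ : Polynomial R :=
  24 * H ^ 4 + C (204 * L - 8 * c₁) * H ^ 3 + C (-52 * c₁ * L + 3 * c₂ + 636 * L ^ 2) * H ^ 2
    + C (-108 * c₁ * L ^ 2 + 13 * c₂ * L + 864 * L ^ 3) * H
    + C (-72 * c₁ * L ^ 3 + 12 * c₂ * L ^ 2 - c₃ * L + 432 * L ^ 4)


lemma ν_add (p q : Polynomial R) : ν (p + q) = ν p + ν q := by
  unfold ν
  apply Polynomial.sum_add_index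
  · intro a; rw [zero_mul]
  · intro a b₁ b₂; rw [add_mul]

lemma ν_CX (a : R) (k : ℕ) :
    ν (C a * X ^ k)
      = a * if k ≤ 1 then 0 else ((-2 : R) ^ (k - 1) - (-3 : R) ^ (k - 1)) * L ^ (k - 2) := by
  rw [C_mul_X_pow_eq_monomial]
  unfold ν
  rw [Polynomial.sum_monomial_index]
  rw [zero_mul]

lemma ν_eq (a0 a1 a2 a3 a4 a5 : R) :
    ν (C a0 * X ^ 0 + C a1 * X ^ 1 + C a2 * X ^ 2 + C a3 * X ^ 3 + C a4 * X ^ 4 + C a5 * X ^ 5)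
      = a2 - 5 * a3 * L + 19 * a4 * L ^ 2 - 65 * a5 * L ^ 3 := by
  rw [ν_add, ν_add, ν_add, ν_add, ν_add, ν_CX, ν_CX, ν_CX, ν_CX, ν_CX, ν_CX]
  norm_num
  ring

set_option maxHeartbeats 2000000 in
/-- Chern numbers of a smooth Weierstrass elliptic fourfold, via pushforward:
`∫c₁⁴ = 0`, `∫c₁²c₂ = 12L(c₁ − L)²`, `∫c₂² = 24L(6L² − c₁L + c₂)`,
`∫c₁c₃ = 12L(c₁ − 6L)(c₁ − L)`, `∫c₄ = 12L(36L² − 6Lc₁ + c₂)`. -/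
theorem chern_numbers_smooth_weierstrass :
    ν (y₁ ^ 4 * (3 * H + 6 * C L)) = 0 ∧
    ν (y₁ ^ 2 * y₂ * (3 * H + 6 * C L)) = 12 * L * (c₁ - L) ^ 2 ∧
    ν (y₂ ^ 2 * (3 * H + 6 * C L)) = 24 * L * (6 * L ^ 2 - c₁ * L + c₂) ∧
    ν (y₁ * y₃ * (3 * H + 6 * C L)) = 12 * L * (c₁ - 6 * L) * (c₁ - L) ∧
    ν (y₄ * (3 * H + 6 * C L)) = 12 * L * (36 * L ^ 2 - 6 * L * c₁ + c₂) := by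
  refine ⟨?_, ?_, ?_, ?_, ?_⟩
  · rw [show y₁ ^ 4 * (3 * H + 6 * C L)
        = C (6*L*c₁^4 - 24*L^2*c₁^3 + 36*L^3*c₁^2 - 24*L^4*c₁ + 6*L^5) * X ^ 0
          + C (3*c₁^4 - 12*L*c₁^3 + 18*L^2*c₁^2 - 12*L^3*c₁ + 3*L^4) * X ^ 1
          + C 0 * X ^ 2 + C 0 * X ^ 3 + C 0 * X ^ 4 + C 0 * X ^ 5 from by
      simp only [y₁, H, map_add, map_sub, map_mul, map_pow, map_neg, map_ofNat, map_one,
        map_zero]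
      ring, ν_eq]
    ring
  · rw [show y₁ ^ 2 * y₂ * (3 * H + 6 * C L)
        = C (6*L*c₁^2*c₂ - 12*L^2*c₁*c₂ - 6*L^2*c₁^3 + 6*L^3*c₂ + 84*L^3*c₁^2 - 150*L^4*c₁ + 72*L^5) * X ^ 0
          + C (3*c₁^2*c₂ - 6*L*c₁*c₂ - 3*L*c₁^3 + 3*L^2*c₂ + 120*L^2*c₁^2 - 231*L^3*c₁ + 114*L^4) * X ^ 1
          + C (57*L*c₁^2 - 114*L^2*c₁ + 57*L^3) * X ^ 2
          + C (9*c₁^2 - 18*L*c₁ + 9*L^2) * X ^ 3 + C 0 * X ^ 4 + C 0 * X ^ 5 from by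
      simp only [y₁, y₂, H, map_add, map_sub, map_mul, map_pow, map_neg, map_ofNat, map_one,
        map_zero]
      ring, ν_eq]
    ring
  · rw [show y₂ ^ 2 * (3 * H + 6 * C L)
        = C (6*L*c₂^2 - 12*L^2*c₁*c₂ + 144*L^3*c₂ + 6*L^3*c₁^2 - 144*L^4*c₁ + 864*L^5) * X ^ 0
          + C (3*c₂^2 - 6*L*c₁*c₂ + 228*L^2*c₂ + 3*L^2*c₁^2 - 228*L^3*c₁ + 2304*L^4) * X ^ 1
          + C (114*L*c₂ - 114*L^2*c₁ + 2382*L^3) * X ^ 2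
          + C (18*c₂ - 18*L*c₁ + 1191*L^2) * X ^ 3
          + C (288*L) * X ^ 4 + C 27 * X ^ 5 from by
      simp only [y₂, H, map_add, map_sub, map_mul, map_pow, map_neg, map_ofNat, map_one,
        map_zero]
      ring, ν_eq]
    ring
  · rw [show y₁ * y₃ * (3 * H + 6 * C L)
        = C (6*L*c₁*c₃ - 6*L^2*c₃ - 6*L^2*c₁*c₂ + 6*L^3*c₂ + 72*L^3*c₁^2 - 504*L^4*c₁ + 432*L^5) * X ^ 0
          + C (3*c₁*c₃ - 3*L*c₃ - 3*L*c₁*c₂ + 3*L^2*c₂ + 114*L^2*c₁^2 - 978*L^3*c₁ + 864*L^4) * X ^ 1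
          + C (57*L*c₁^2 - 693*L^2*c₁ + 636*L^3) * X ^ 2
          + C (9*c₁^2 - 213*L*c₁ + 204*L^2) * X ^ 3
          + C (-24*c₁ + 24*L) * X ^ 4 + C 0 * X ^ 5 from by
      simp only [y₁, y₃, H, map_add, map_sub, map_mul, map_pow, map_neg, map_ofNat, map_one,
        map_zero]
      ring, ν_eq]
    ring
  · rw [show y₄ * (3 * H + 6 * C L)
        = C (-6*L^2*c₃ + 72*L^3*c₂ - 432*L^4*c₁ + 2592*L^5) * X ^ 0
          + C (-3*L*c₃ + 114*L^2*c₂ - 864*L^3*c₁ + 6480*L^4) * X ^ 1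
          + C (57*L*c₂ - 636*L^2*c₁ + 6408*L^3) * X ^ 2
          + C (9*c₂ - 204*L*c₁ + 3132*L^2) * X ^ 3
          + C (-24*c₁ + 756*L) * X ^ 4 + C 72 * X ^ 5 from by
      simp only [y₄, H, map_add, map_sub, map_mul, map_pow, map_neg, map_ofNat, map_one,
        map_zero]
      ring, ν_eq]
    ring

end SmoothWeierstrassChernNumbers
end
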